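/- Let p ∈ (0,1) and let r ≥ 2 and 1 ≤ i ≤ r−1 be integers. For every vector (x_1,…,x_r) of nonnegative reals with Σ_{j=1}^r x_j = 1 and x_{j+1} ≤ p·x_j for all j ∈ {1,…,r−1}, one has Σ_{j=1}^i x_j − i·x_{i+1} ≥ (i·p^{i+1} − (i+1)·p^i + 1)/(1 − p^r); moreover, equality holds if and only if x_j = (1−p)·p^{j−1}/(1−p^r) for all j ∈ {1,…,r}. -/

import Mathlib

set_option maxHeartbeats 1000000


/-- Lemma EC.4 ("Lemma fOA"): lower bound on `∑_{j=1}^i x_j − i·x_{i+1}` for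
`p`-separable probability vectors, with equality exactly at the geometric
(Ordinal Attraction) distribution. -/
theorem stmt0 (p : ℝ) (hp0 : 0 < p) (hp1 : p < 1) (r i : ℕ) (hr : 2 ≤ r)
    (hi1 : 1 ≤ i) (hi2 : i ≤ r - 1) (x : ℕ → ℝ)
    (hx0 : ∀ j ∈ Finset.Icc 1 r, 0 ≤ x j)
    (hsum : ∑ j ∈ Finset.Icc 1 r, x j = 1)
    (hsep : ∀ j ∈ Finset.Icc 1 (r - 1), x (j + 1) ≤ p * x j) :
    ((i : ℝ) * p ^ (i + 1) - ((i : ℝ) + 1) * p ^ i + 1) / (1 - p ^ r)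
      ≤ (∑ j ∈ Finset.Icc 1 i, x j) - (i : ℝ) * x (i + 1)
    ∧ ((∑ j ∈ Finset.Icc 1 i, x j) - (i : ℝ) * x (i + 1)
        = ((i : ℝ) * p ^ (i + 1) - ((i : ℝ) + 1) * p ^ i + 1) / (1 - p ^ r)
      ↔ ∀ j ∈ Finset.Icc 1 r, x j = (1 - p) * p ^ (j - 1) / (1 - p ^ r)) := by
  have hir : i + 1 ≤ r := by omega
  have hD : (0:ℝ) < 1 - p ^ r := by
    have := pow_lt_one₀ hp0.le hp1 (by omega : r ≠ 0)
    linarith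
  have hpi : (0:ℝ) < p ^ i := pow_pos hp0 i
  set D : ℝ := 1 - p ^ r with hDdef
  set t : ℝ := x (i + 1) with htdef
  set S1 : ℝ := ∑ j ∈ Finset.Icc 1 i, x j with hS1def
  set N : ℝ := (i : ℝ) * p ^ (i + 1) - ((i : ℝ) + 1) * p ^ i + 1 with hNdef
  -- chain lemma
  have hchain : ∀ d a, 1 ≤ a → a + d ≤ r → x (a + d) ≤ p ^ d * x a := by
    intro d
    induction d with
    | zero => intro a _ _; simp
    | succ d ih =>
      intro a ha har
      have h1 : x (a + d + 1) ≤ p * x (a + d) := by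
        apply hsep
        simp only [Finset.mem_Icc]
        omega
      have h2 : x (a + d) ≤ p ^ d * x a := ih a ha (by omega)
      calc x (a + (d + 1)) = x (a + d + 1) := by ring_nf
        _ ≤ p * x (a + d) := h1
        _ ≤ p * (p ^ d * x a) := by nlinarith
        _ = p ^ (d + 1) * x a := by ring
  -- termwise bounds
  have hB1' : ∀ j ∈ Finset.Icc 1 i, t * p ^ (j - 1) ≤ p ^ i * x j := by
    intro j hj
    simp only [Finset.mem_Icc] at hj
    have h := hchain (i + 1 - j) j hj.1 (by omega)
    rw [(by omega : j + (i + 1 - j) = i + 1)] at h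
    have h2 := mul_le_mul_of_nonneg_right h (le_of_lt (pow_pos hp0 (j - 1)))
    calc t * p ^ (j - 1) ≤ p ^ (i + 1 - j) * x j * p ^ (j - 1) := h2
      _ = p ^ (i + 1 - j) * p ^ (j - 1) * x j := by ring
      _ = p ^ i * x j := by rw [← pow_add]; congr 2; omega
  have hB2' : ∀ j ∈ Finset.Icc (i+1) r, x j ≤ t * p ^ (j - (i+1)) := by
    intro j hj
    simp only [Finset.mem_Icc] at hj
    have h := hchain (j - (i + 1)) (i + 1) (by omega) (by omega)
    rw [(by omega : i + 1 + (j - (i + 1)) = j)] at h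
    linarith [h]
  -- geometric sums
  set Gi : ℝ := ∑ j ∈ Finset.Icc 1 i, p ^ (j - 1) with hGidef
  set K : ℝ := ∑ j ∈ Finset.Icc (i+1) r, p ^ (j - (i+1)) with hKdef
  have hGirange : Gi = ∑ k ∈ Finset.range i, p ^ k := by
    rw [hGidef, ← Finset.Ico_add_one_right_eq_Icc, Finset.sum_Ico_eq_sum_range]
    simp
  have hKrange : K = ∑ k ∈ Finset.range (r - i), p ^ k := by
    rw [hKdef, ← Finset.Ico_add_one_right_eq_Icc, Finset.sum_Ico_eq_sum_range]
    apply Finset.sum_congr (by congr 1; omega)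
    intro k _; congr 1; omega
  have hGi : (1 - p) * Gi = 1 - p ^ i := by
    rw [hGirange]; have h := geom_sum_mul p i; linear_combination -h
  have hK : (1 - p) * K = 1 - p ^ (r - i) := by
    rw [hKrange]; have h := geom_sum_mul p (r - i); linear_combination -h
  have hsplit : p ^ i * p ^ (r - i) = p ^ r := by
    rw [← pow_add]; congr 1; omega
  set M : ℝ := Gi - (i : ℝ) * p ^ i with hMdef
  have hM : 0 < M := by
    rw [hMdef, hGirange]
    have h1 : (i : ℝ) * p ^ i = ∑ _k ∈ Finset.range i, p ^ i := by
      rw [Finset.sum_const, Finset.card_range, nsmul_eq_mul]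
    rw [h1, sub_pos]
    apply Finset.sum_lt_sum_of_nonempty
    · exact Finset.nonempty_range_iff.mpr (by omega)
    · intro k hk
      exact pow_lt_pow_right_of_lt_one₀ hp0 hp1 (Finset.mem_range.mp hk)
  have hN : N = (1 - p) * M := by
    rw [hNdef, hMdef, pow_succ]
    linarith [hGi]
  -- sum split
  have e0 : ∀ m n : ℕ, Finset.Icc (m+1) n = Finset.Ioc m n := fun m n => Finset.Icc_add_one_left_eq_Ioc m n
  have hS2 : S1 + (∑ j ∈ Finset.Icc (i+1) r, x j) = 1 := by
    rw [hS1def, ← hsum, e0 i r, show Finset.Icc 1 i = Finset.Ioc 0 i from e0 0 i,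
      show Finset.Icc 1 r = Finset.Ioc 0 r from e0 0 r]
    exact Finset.sum_Ioc_consecutive _ (Nat.zero_le i) (by omega)
  set S2 : ℝ := ∑ j ∈ Finset.Icc (i+1) r, x j with hS2def
  -- sum bounds
  have hB1 : t * Gi ≤ p ^ i * S1 := by
    rw [hGidef, hS1def, Finset.mul_sum, Finset.mul_sum]
    exact Finset.sum_le_sum hB1'
  have hB2 : S2 ≤ t * K := by
    rw [hS2def, hKdef, Finset.mul_sum]
    exact Finset.sum_le_sum hB2'
  have ht0 : 0 ≤ t := hx0 (i+1) (by simp only [Finset.mem_Icc]; omega)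
  have hK0 : 0 ≤ K := by
    rw [hKrange]; positivity
  have hpiK : p ^ i * ((1 - p) * K) = p ^ i - p ^ r := by
    rw [hK, mul_sub, mul_one, hsplit]
  -- main inequality, parametrized by strictness cases
  have key : N / D ≤ S1 - (i:ℝ) * t := by
    rw [div_le_iff₀ hD]
    rcases le_total (t * D) ((1 - p) * p ^ i) with htB | htA
    · -- case B
      have e1 : (1 - t * K - (i:ℝ) * t) * D ≤ (S1 - (i:ℝ) * t) * D := by
        apply mul_le_mul_of_nonneg_right _ hD.le
        linarith [hB2]
      have e2 : t * D * K ≤ p ^ i - p ^ r := by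
        calc t * D * K ≤ (1 - p) * p ^ i * K :=
              mul_le_mul_of_nonneg_right htB hK0
          _ = p ^ i * ((1 - p) * K) := by ring
          _ = p ^ i - p ^ r := hpiK
      have e3 : (i:ℝ) * (t * D) ≤ (i:ℝ) * ((1 - p) * p ^ i) :=
        mul_le_mul_of_nonneg_left htB (by positivity)
      have hrw : (1 - t * K - (i:ℝ) * t) * D = D - (t * D * K) - (i:ℝ) * (t * D) := by
        ring
      have hid : N = D - (p ^ i - p ^ r) - (i:ℝ) * ((1 - p) * p ^ i) := by
        rw [hNdef, hDdef, pow_succ]; ring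
      nlinarith [e1, e2, e3, hrw, hid]
    · -- case A
      have f1 : t * M ≤ p ^ i * (S1 - (i:ℝ) * t) := by
        rw [hMdef]; nlinarith [hB1]
      have f2 : (1 - p) * p ^ i * M ≤ t * D * M :=
        mul_le_mul_of_nonneg_right htA hM.le
      have f3 : t * M * D ≤ p ^ i * (S1 - (i:ℝ) * t) * D :=
        mul_le_mul_of_nonneg_right f1 hD.le
      have hNp : p ^ i * N = (1 - p) * p ^ i * M := by rw [hN]; ring
      have : p ^ i * N ≤ p ^ i * ((S1 - (i:ℝ) * t) * D) := by nlinarith [f2, f3, hNp]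
      exact le_of_mul_le_mul_left this hpi
  refine ⟨key, ?_, ?_⟩
  · -- forward direction of iff
    intro hEq
    -- t * D = (1-p) * p^i
    have htstar : t * D = (1 - p) * p ^ i := by
      rcases lt_trichotomy (t * D) ((1 - p) * p ^ i) with hlt | heq | hgt
      · exfalso
        have e1 : (1 - t * K - (i:ℝ) * t) * D ≤ (S1 - (i:ℝ) * t) * D := by
          apply mul_le_mul_of_nonneg_right _ hD.le
          linarith [hB2]
        have e2 : t * D * K ≤ p ^ i - p ^ r := by
          calc t * D * K ≤ (1 - p) * p ^ i * K :=
                mul_le_mul_of_nonneg_right hlt.le hK0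
            _ = p ^ i * ((1 - p) * K) := by ring
            _ = p ^ i - p ^ r := hpiK
        have e3 : (i:ℝ) * (t * D) < (i:ℝ) * ((1 - p) * p ^ i) := by
          apply mul_lt_mul_of_pos_left hlt
          exact_mod_cast Nat.cast_pos.mpr (by omega : 0 < i)
        have hEq' : (S1 - (i:ℝ) * t) * D = N := by
          rw [hEq]; field_simp
        have hrw : (1 - t * K - (i:ℝ) * t) * D = D - (t * D * K) - (i:ℝ) * (t * D) := by
          ring
        have hid : N = D - (p ^ i - p ^ r) - (i:ℝ) * ((1 - p) * p ^ i) := by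
          rw [hNdef, hDdef, pow_succ]; ring
        nlinarith [e1, e2, e3, hrw, hid, hEq']
      · exact heq
      · exfalso
        have f1 : t * M ≤ p ^ i * (S1 - (i:ℝ) * t) := by
          rw [hMdef]; nlinarith [hB1]
        have f2 : (1 - p) * p ^ i * M < t * D * M :=
          mul_lt_mul_of_pos_right hgt hM
        have f3 : t * M * D ≤ p ^ i * (S1 - (i:ℝ) * t) * D :=
          mul_le_mul_of_nonneg_right f1 hD.le
        have hNp : p ^ i * N = (1 - p) * p ^ i * M := by rw [hN]; ring
        have hEq' : (S1 - (i:ℝ) * t) * D = N := by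
          rw [hEq]; field_simp
        nlinarith [f2, f3, hNp, hEq', hpi]
    have hEq' : (S1 - (i:ℝ) * t) * D = N := by rw [hEq]; field_simp
    -- exact sum equalities
    have hS1exact : p ^ i * S1 = t * Gi := by
      have hNt : p ^ i * N = t * D * M := by
        rw [hN]; linear_combination (-M) * htstar
      have h1 : p ^ i * (S1 - (i:ℝ) * t) * D = t * M * D := by
        linear_combination p ^ i * hEq' + hNt
      have h2 : p ^ i * (S1 - (i:ℝ) * t) = t * M := mul_right_cancel₀ hD.ne' h1
      rw [hMdef] at h2; linear_combination h2
    have hS2exact : S2 = t * K := by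
      -- S2 = 1 - S1; p^i * S2 = p^i - p^i S1 = p^i - t Gi ; want = t K * p^i
      -- use htstar etc.
      have h1 : p ^ i * S2 = p ^ i * (1 - S1) := by rw [← hS2]; ring_nf
      have h2 : p ^ i * S2 = p ^ i - t * Gi := by rw [h1, mul_sub, mul_one, hS1exact]
      -- need p^i - t*Gi = p^i * (t * K)
      -- t*D = (1-p)p^i.  (1-p)Gi = 1-p^i. (1-p)K = 1 - p^{r-i}. p^i p^{r-i} = p^r
      -- multiply h2 by (1-p)*D :  claim: (p^i - t Gi)*(1-p)*D = p^i * t * K * (1-p) * D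
      have hp1' : (0:ℝ) < 1 - p := by linarith
      have key2 : (p ^ i - t * Gi) * ((1 - p) * D) = p ^ i * (t * K) * ((1 - p) * D) := by
        have lhs : (p ^ i - t * Gi) * ((1 - p) * D) =
            p ^ i * (1-p) * D - (t * D) * ((1-p) * Gi) := by ring
        have rhs : p ^ i * (t * K) * ((1 - p) * D) =
            p ^ i * (t * D) * ((1-p) * K) := by ring
        rw [lhs, rhs, htstar, hGi, hK, hDdef]
        linear_combination (1 - p) * p ^ i * hsplit
      have hposD : ((1:ℝ) - p) * D ≠ 0 := by positivity
      have h3 : p ^ i - t * Gi = p ^ i * (t * K) := mul_right_cancel₀ hposD key2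
      have : p ^ i * S2 = p ^ i * (t * K) := by rw [h2, h3]
      exact mul_left_cancel₀ hpi.ne' this
    -- termwise equalities
    have hterm1 : ∀ j ∈ Finset.Icc 1 i, t * p ^ (j - 1) = p ^ i * x j := by
      have hsum1 : (∑ j ∈ Finset.Icc 1 i, t * p ^ (j-1)) = ∑ j ∈ Finset.Icc 1 i, p ^ i * x j := by
        rw [← Finset.mul_sum, ← Finset.mul_sum, ← hGidef, ← hS1def, hS1exact]
      exact (Finset.sum_eq_sum_iff_of_le hB1').mp hsum1
    have hterm2 : ∀ j ∈ Finset.Icc (i+1) r, x j = t * p ^ (j - (i+1)) := by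
      have hsum2 : (∑ j ∈ Finset.Icc (i+1) r, x j) = ∑ j ∈ Finset.Icc (i+1) r, t * p ^ (j-(i+1)) := by
        rw [← Finset.mul_sum, ← hKdef, ← hS2def, hS2exact]
      exact (Finset.sum_eq_sum_iff_of_le hB2').mp hsum2
    intro j hj
    simp only [Finset.mem_Icc] at hj
    rw [eq_div_iff hD.ne']
    rcases le_or_gt j i with hji | hji
    · have h := hterm1 j (by simp only [Finset.mem_Icc]; omega)
      -- t * p^{j-1} = p^i * x j ; multiply by D: p^i x_j D = tD p^{j-1} = (1-p) p^i p^{j-1}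
      have h2 : p ^ i * (x j * D) = p ^ i * ((1 - p) * p ^ (j - 1)) := by
        calc p ^ i * (x j * D) = (t * p ^ (j-1)) * D := by linear_combination (-D) * h
          _ = (t * D) * p ^ (j - 1) := by ring
          _ = (1 - p) * p ^ i * p ^ (j-1) := by rw [htstar]
          _ = p ^ i * ((1 - p) * p ^ (j - 1)) := by ring
      exact mul_left_cancel₀ hpi.ne' h2
    · have h := hterm2 j (by simp only [Finset.mem_Icc]; omega)
      calc x j * D = (t * D) * p ^ (j - (i+1)) := by rw [h]; ring
        _ = (1 - p) * (p ^ i * p ^ (j - (i+1))) := by rw [htstar]; ring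
        _ = (1 - p) * p ^ (j - 1) := by rw [← pow_add]; congr 2; omega
  · -- reverse direction of iff
    intro hgeo
    have hS1' : S1 = ((1 - p) / D) * Gi := by
      rw [hS1def, hGidef, Finset.mul_sum]
      apply Finset.sum_congr rfl
      intro j hj
      simp only [Finset.mem_Icc] at hj
      rw [hgeo j (by simp only [Finset.mem_Icc]; omega)]
      ring
    have ht' : t = (1 - p) * p ^ i / D := by
      rw [htdef, hgeo (i+1) (by simp only [Finset.mem_Icc]; omega), Nat.add_sub_cancel]
    rw [hS1', ht', hN, hMdef]
    field_simp
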